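/- Let L be a finite lattice satisfying the join-semidistributive law: for all a, b, c ∈ L, if a ⊔ b = a ⊔ c then a ⊔ (b ⊓ c) = a ⊔ b. Suppose e ⋖ g is a cover relation in L (e < g and no c satisfies e < c < g), and let j be the least element of the set {f ∈ L : e ⊔ f = g}. Then j is join-irreducible: j is not the bottom element of L, and whenever j = b ⊔ c one has j = b or j = c. -/
import Mathlib


/-- In a finite join-semidistributive lattice, if `e ⋖ g` is a cover relation and
`j` is the least element of `{f : e ⊔ f = g}`, then `j` is join-irreducible. -/
theorem min_join_complement_joinIrreducible {L : Type*} [Lattice L] [Fintype L] [OrderBot L]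
    (hSD : ∀ a b c : L, a ⊔ b = a ⊔ c → a ⊔ (b ⊓ c) = a ⊔ b)
    (e g : L) (hcov : e ⋖ g) (j : L)
    (hj : e ⊔ j = g) (hmin : ∀ f : L, e ⊔ f = g → j ≤ f) :
    j ≠ ⊥ ∧ ∀ b c : L, j = b ⊔ c → j = b ∨ j = c := by
  constructor
  · rintro rfl
    simp only [sup_bot_eq] at hj
    exact hcov.lt.ne hj
  · intro b c hbc
    have hbj : b ≤ j := by rw [hbc]; exact le_sup_left
    have hcj : c ≤ j := by rw [hbc]; exact le_sup_right
    have heg : ∀ x : L, x ≤ j → e ⊔ x = e ∨ e ⊔ x = g := by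
      intro x hx
      exact hcov.eq_or_eq (le_sup_left : e ≤ e ⊔ x)
        (by rw [← hj]; exact sup_le_sup_left hx e)
    rcases heg b hbj with hb | hb
    · rcases heg c hcj with hc | hc
      · exfalso
        have : e ⊔ j = e := by rw [hbc, ← sup_assoc, hb, hc]
        exact hcov.lt.ne (this.symm.trans hj)
      · exact Or.inr (le_antisymm (hmin c hc) hcj)
    · exact Or.inl (le_antisymm (hmin b hb) hbj)
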